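/- Let 0<α<1 and ω_n = ((n+1)^α − n^α)/Γ(α+1) for n = 0,1,2,…. Then ω_n > 0 for all n, Σ_{n=0}^∞ ω_n = ∞, and ω_{n+1}/ω_n > ω_n/ω_{n−1} for all n ≥ 1. -/

import Mathlib

open Real MeasureTheory

/-- Midpoint quadrature weights `ω_m = ((m+1)^α − m^α)/Γ(α+1)`. -/
noncomputable def omegaW (α : ℝ) (m : ℕ) : ℝ :=
  (((m : ℝ) + 1) ^ α - (m : ℝ) ^ α) / Real.Gamma (α + 1)

private lemma shift_int (α : ℝ) (hα1 : α < 1) (hm1 : -1 < α - 1) (x d : ℝ) :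
    (∫ t in x..x+1, (t+d) ^ (α-1)) = ((x+1+d) ^ α - (x+d) ^ α) / α := by
  rw [intervalIntegral.integral_comp_add_right (fun t => t ^ (α-1)) d,
    integral_rpow (Or.inl hm1), sub_add_cancel]

set_option maxHeartbeats 1000000 in
private lemma key_ineq (α : ℝ) (hα0 : 0 < α) (hα1 : α < 1) (x : ℝ) (hx : 0 ≤ x) :
    ((x+2)^α - (x+1)^α)^2 < ((x+3)^α - (x+2)^α) * ((x+1)^α - x^α) := by
  have hp1 : (-1:ℝ) < α - 1 := by linarith
  have hp0 : α - 1 < 0 := by linarith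
  have hq1 : (-1:ℝ) < (α-1)/2 := by linarith
  have hq0 : (α-1)/2 < 0 := by linarith
  have hxlt : x < x + 1 := by linarith
  set I0 : ℝ := ∫ t in x..x+1, t ^ (α-1) with hI0def
  set I1 : ℝ := ∫ t in x..x+1, (t+1) ^ (α-1) with hI1def
  set I2 : ℝ := ∫ t in x..x+1, (t+2) ^ (α-1) with hI2def
  have hI0 : I0 = ((x+1)^α - x^α)/α := by
    rw [hI0def, integral_rpow (Or.inl hp1), sub_add_cancel]
  have hI1 : I1 = ((x+2)^α - (x+1)^α)/α := by
    rw [hI1def, shift_int α hα1 hp1 x 1]; ring_nf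
  have hI2 : I2 = ((x+3)^α - (x+2)^α)/α := by
    rw [hI2def, shift_int α hα1 hp1 x 2]; ring_nf
  -- pointwise strict inequality
  have ptwise : ∀ t : ℝ, 0 < t →
      (t+1) ^ (α-1) < t ^ ((α-1)/2) * (t+2) ^ ((α-1)/2) := by
    intro t ht
    have h1 : (0:ℝ) < t * (t+2) := by nlinarith
    have h2 : t * (t+2) < (t+1)^2 := by nlinarith
    have h3 : (((t+1):ℝ)^2) ^ ((α-1)/2) < (t * (t+2)) ^ ((α-1)/2) :=
      Real.rpow_lt_rpow_of_neg h1 h2 hq0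
    calc (t+1) ^ (α-1) = ((t+1)^2) ^ ((α-1)/2) := by
          rw [← Real.rpow_natCast (t+1) 2, ← Real.rpow_mul (by linarith)]
          congr 1
          push_cast
          ring
      _ < (t * (t+2)) ^ ((α-1)/2) := h3
      _ = t ^ ((α-1)/2) * (t+2) ^ ((α-1)/2) := Real.mul_rpow ht.le (by linarith)
  -- integrability
  have hfi : IntervalIntegrable (fun t : ℝ => (t+1) ^ (α-1)) volume x (x+1) := by
    apply ContinuousOn.intervalIntegrable
    apply ContinuousOn.rpow_const (continuous_add_right (1:ℝ)).continuousOn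
    intro t ht
    rw [Set.uIcc_of_le hxlt.le] at ht
    exact Or.inl (ne_of_gt (by nlinarith [ht.1]))
  have hcont2 : ContinuousOn (fun t : ℝ => (t+2) ^ ((α-1)/2)) (Set.uIcc x (x+1)) := by
    apply ContinuousOn.rpow_const (continuous_add_right (2:ℝ)).continuousOn
    intro t ht
    rw [Set.uIcc_of_le hxlt.le] at ht
    exact Or.inl (ne_of_gt (by nlinarith [ht.1]))
  have hgi : IntervalIntegrable
      (fun t : ℝ => t ^ ((α-1)/2) * (t+2) ^ ((α-1)/2)) volume x (x+1) :=
    (intervalIntegral.intervalIntegrable_rpow' hq1).mul_continuousOn hcont2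
  -- strict step
  have hstep : I1 < ∫ t in x..x+1, t ^ ((α-1)/2) * (t+2) ^ ((α-1)/2) := by
    rw [hI1def]
    apply intervalIntegral.integral_lt_integral_of_ae_le_of_measure_setOf_lt_ne_zero
      hxlt.le hfi hgi
    · filter_upwards [ae_restrict_mem measurableSet_Ioc] with t ht
      exact (ptwise t (hx.trans_lt ht.1)).le
    · have hsub : Set.Ioc x (x+1) ⊆
          {t : ℝ | (t+1) ^ (α-1) < t ^ ((α-1)/2) * (t+2) ^ ((α-1)/2)} :=
        fun t ht => ptwise t (hx.trans_lt ht.1)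
      rw [Measure.restrict_apply' measurableSet_Ioc,
        Set.inter_eq_self_of_subset_right hsub]
      simp [hxlt]
  -- Cauchy-Schwarz / Hölder step
  set μ := volume.restrict (Set.Ioc x (x+1)) with hμ
  have hmeas0 : AEStronglyMeasurable (fun t : ℝ => t ^ ((α-1)/2)) μ := by
    apply ContinuousOn.aestronglyMeasurable _ measurableSet_Ioc
    apply ContinuousOn.rpow_const continuousOn_id
    intro t ht
    exact Or.inl (ne_of_gt (hx.trans_lt ht.1))
  have hmeas2 : AEStronglyMeasurable (fun t : ℝ => (t+2) ^ ((α-1)/2)) μ := by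
    apply ContinuousOn.aestronglyMeasurable _ measurableSet_Ioc
    apply ContinuousOn.rpow_const (continuous_add_right (2:ℝ)).continuousOn
    intro t ht
    exact Or.inl (ne_of_gt (by nlinarith [hx.trans_lt ht.1]))
  have hint0 : Integrable (fun t : ℝ => t ^ (α-1)) μ :=
    (intervalIntegral.intervalIntegrable_rpow' hp1 (a := x) (b := x+1)).1
  have hint2 : Integrable (fun t : ℝ => (t+2) ^ (α-1)) μ := by
    have : IntervalIntegrable (fun t : ℝ => (t+2) ^ (α-1)) volume x (x+1) := by
      apply ContinuousOn.intervalIntegrable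
      apply ContinuousOn.rpow_const (continuous_add_right (2:ℝ)).continuousOn
      intro t ht
      rw [Set.uIcc_of_le hxlt.le] at ht
      exact Or.inl (ne_of_gt (by nlinarith [ht.1]))
    exact this.1
  have hsq0 : ∀ t : ℝ, 0 ≤ t → (t ^ ((α-1)/2)) ^ (2:ℝ) = t ^ (α-1) := by
    intro t ht
    rw [← Real.rpow_mul ht]
    norm_num
  have hmem0 : MemLp (fun t : ℝ => t ^ ((α-1)/2)) (ENNReal.ofReal 2) μ := by
    have h2 : ENNReal.ofReal 2 = 2 := by norm_num
    rw [h2, memLp_two_iff_integrable_sq hmeas0]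
    apply hint0.congr
    filter_upwards [ae_restrict_mem measurableSet_Ioc] with t ht
    have := hsq0 t (hx.trans ht.1.le)
    rw [Real.rpow_two] at this
    exact this.symm
  have hmem2 : MemLp (fun t : ℝ => (t+2) ^ ((α-1)/2)) (ENNReal.ofReal 2) μ := by
    have h2 : ENNReal.ofReal 2 = 2 := by norm_num
    rw [h2, memLp_two_iff_integrable_sq hmeas2]
    apply hint2.congr
    filter_upwards [ae_restrict_mem measurableSet_Ioc] with t ht
    have := hsq0 (t+2) (by nlinarith [hx.trans ht.1.le])
    rw [Real.rpow_two] at this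
    exact this.symm
  have hnn0 : (0:ℝ → ℝ) ≤ᵐ[μ] fun t : ℝ => t ^ ((α-1)/2) := by
    filter_upwards [ae_restrict_mem measurableSet_Ioc] with t ht
    exact Real.rpow_nonneg (hx.trans ht.1.le) _
  have hnn2 : (0:ℝ → ℝ) ≤ᵐ[μ] fun t : ℝ => (t+2) ^ ((α-1)/2) := by
    filter_upwards [ae_restrict_mem measurableSet_Ioc] with t ht
    exact Real.rpow_nonneg (by nlinarith [hx.trans ht.1.le]) _
  have hconj : (2:ℝ).HolderConjugate 2 := Real.holderConjugate_iff.mpr ⟨by norm_num, by norm_num⟩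
  have hCS := MeasureTheory.integral_mul_le_Lp_mul_Lq_of_nonneg hconj hnn0 hnn2 hmem0 hmem2
  -- rewrite the three integrals in hCS
  have e0 : (∫ t, (t ^ ((α-1)/2)) ^ (2:ℝ) ∂μ) = I0 := by
    rw [hI0def, intervalIntegral.integral_of_le hxlt.le]
    apply integral_congr_ae
    filter_upwards [ae_restrict_mem measurableSet_Ioc] with t ht
    exact hsq0 t (hx.trans ht.1.le)
  have e2 : (∫ t, ((t+2) ^ ((α-1)/2)) ^ (2:ℝ) ∂μ) = I2 := by
    rw [hI2def, intervalIntegral.integral_of_le hxlt.le]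
    apply integral_congr_ae
    filter_upwards [ae_restrict_mem measurableSet_Ioc] with t ht
    exact hsq0 (t+2) (by nlinarith [hx.trans ht.1.le])
  have eD : (∫ t, t ^ ((α-1)/2) * (t+2) ^ ((α-1)/2) ∂μ)
      = ∫ t in x..x+1, t ^ ((α-1)/2) * (t+2) ^ ((α-1)/2) := by
    rw [intervalIntegral.integral_of_le hxlt.le]
  rw [e0, e2, eD] at hCS
  -- positivity of the integrals
  have hg0 : 0 < (x+1)^α - x^α := by
    have := Real.rpow_lt_rpow hx (by linarith : x < x+1) hα0; linarith
  have hg1 : 0 < (x+2)^α - (x+1)^α := by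
    have := Real.rpow_lt_rpow (by linarith : (0:ℝ) ≤ x+1) (by linarith : x+1 < x+2) hα0
    linarith
  have hg2 : 0 < (x+3)^α - (x+2)^α := by
    have := Real.rpow_lt_rpow (by linarith : (0:ℝ) ≤ x+2) (by linarith : x+2 < x+3) hα0
    linarith
  have hI0pos : 0 < I0 := by rw [hI0]; positivity
  have hI2pos : 0 < I2 := by rw [hI2]; positivity
  have hI1nn : 0 ≤ I1 := by rw [hI1]; positivity
  have h12 : I1 < Real.sqrt (I0 * I2) := by
    calc I1 < _ := hstep
      _ ≤ I0 ^ ((1:ℝ)/2) * I2 ^ ((1:ℝ)/2) := hCS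
      _ = Real.sqrt I0 * Real.sqrt I2 := by
          rw [Real.sqrt_eq_rpow, Real.sqrt_eq_rpow]
      _ = Real.sqrt (I0 * I2) := (Real.sqrt_mul hI0pos.le _).symm
  have hsq : I1^2 < I0 * I2 := (Real.lt_sqrt hI1nn).1 h12
  have hα : α ≠ 0 := hα0.ne'
  have e1' : (x+2)^α - (x+1)^α = α * I1 := by rw [hI1]; field_simp
  have e0' : (x+1)^α - x^α = α * I0 := by rw [hI0]; field_simp
  have e2' : (x+3)^α - (x+2)^α = α * I2 := by rw [hI2]; field_simp
  rw [e1', e0', e2']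
  nlinarith [mul_lt_mul_of_pos_left hsq (mul_pos hα0 hα0)]

set_option maxHeartbeats 1000000 in
theorem stmt_17 (α : ℝ) (hα0 : 0 < α) (hα1 : α < 1) :
    (∀ n : ℕ, 0 < omegaW α n) ∧
    ¬ Summable (fun n : ℕ => omegaW α n) ∧
    ∀ n : ℕ, 1 ≤ n → omegaW α n / omegaW α (n - 1) < omegaW α (n + 1) / omegaW α n := by
  have hΓ : 0 < Real.Gamma (α+1) := Real.Gamma_pos_of_pos (by linarith)
  have hpos : ∀ n : ℕ, 0 < omegaW α n := by
    intro n
    apply div_pos _ hΓ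
    have := Real.rpow_lt_rpow (Nat.cast_nonneg n) (lt_add_one (n:ℝ)) hα0
    linarith
  refine ⟨hpos, ?_, ?_⟩
  · intro hs
    have hsum : ∀ N : ℕ, ∑ i ∈ Finset.range N, omegaW α i = (N:ℝ)^α / Real.Gamma (α+1) := by
      intro N
      simp only [omegaW]
      rw [← Finset.sum_div]
      congr 1
      have h := Finset.sum_range_sub (fun k : ℕ => (k:ℝ)^α) N
      simp only [Nat.cast_zero, Real.zero_rpow hα0.ne', sub_zero] at h
      rw [← h]
      apply Finset.sum_congr rfl
      intro i _
      push_cast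
      ring
    have h1 : Filter.Tendsto (fun N : ℕ => ∑ i ∈ Finset.range N, omegaW α i)
        Filter.atTop (nhds (∑' n, omegaW α n)) := hs.hasSum.tendsto_sum_nat
    have h2 : Filter.Tendsto (fun N : ℕ => (N:ℝ)^α / Real.Gamma (α+1))
        Filter.atTop Filter.atTop := by
      apply Filter.Tendsto.atTop_div_const hΓ
      exact (tendsto_rpow_atTop hα0).comp tendsto_natCast_atTop_atTop
    rw [funext hsum] at h1
    exact (not_tendsto_atTop_of_tendsto_nhds h1) h2
  · intro n hn
    obtain ⟨m, rfl⟩ := Nat.exists_eq_add_of_le hn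
    have key' := key_ineq α hα0 hα1 (m:ℝ) (Nat.cast_nonneg m)
    have h0 := hpos m
    have h1 := hpos (1+m)
    have hidx : 1 + m - 1 = m := by omega
    rw [hidx, div_lt_div_iff₀ h0 h1]
    simp only [omegaW]
    push_cast
    have habc : ∀ a b c : ℝ, a^2 < b*c →
        a/Real.Gamma (α+1) * (a/Real.Gamma (α+1)) <
          b/Real.Gamma (α+1) * (c/Real.Gamma (α+1)) := by
      intro a b c h
      rw [div_mul_div_comm, div_mul_div_comm, div_lt_div_iff_of_pos_right (by positivity)]
      nlinarith [h]
    rw [show ((1:ℝ)+(m:ℝ)) = (m:ℝ)+1 from by ring,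
      show ((m:ℝ)+1+1) = (m:ℝ)+2 from by ring,
      show ((m:ℝ)+2+1) = (m:ℝ)+3 from by ring]
    exact habc _ _ _ key'
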